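/- Let (c_k)_{k≥1} be nonnegative reals and set V_N = 2·∑_{k=1}^N k²·c_k². Assume V_N is slowly varying in the sense of Karamata and V_N → ∞. Then ∑_{1 ≤ s,t ≤ N, s+t ≥ N+1} s·c_s·c_t = o(V_N) as N → ∞. -/

import Mathlib

open Filter Finset
set_option maxHeartbeats 1000000


private lemma aux_sum_inv_sqrt (n : ℕ) :
    ∑ t ∈ Icc 1 n, 1 / Real.sqrt t ≤ 2 * Real.sqrt n := by
  induction n with
  | zero => simp
  | succ n ih =>
    rw [Finset.sum_Icc_succ_top (by omega)]
    have h2 : (0:ℝ) < Real.sqrt (n+1) := Real.sqrt_pos.mpr (by positivity)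
    have e1 : Real.sqrt n ^ 2 = (n:ℝ) := Real.sq_sqrt (by positivity)
    have e2 : Real.sqrt ((n:ℝ)+1) ^ 2 = (n:ℝ)+1 := Real.sq_sqrt (by positivity)
    have h1 : (0:ℝ) ≤ Real.sqrt n := Real.sqrt_nonneg _
    have key : 1 / Real.sqrt ((n:ℝ)+1) ≤ 2*Real.sqrt ((n:ℝ)+1) - 2*Real.sqrt n := by
      rw [div_le_iff₀ h2]
      nlinarith [sq_nonneg (Real.sqrt ((n:ℝ)+1) - Real.sqrt n)]
    push_cast
    push_cast at ih
    linarith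

private lemma aux_sum_pow32 (a N : ℕ) (ha : 1 ≤ a) :
    ∑ t ∈ Icc a N, 1 / ((t:ℝ) * Real.sqrt t) ≤ 3 / Real.sqrt a := by
  have hsa : (0:ℝ) < Real.sqrt a := Real.sqrt_pos.mpr (by positivity)
  rcases le_or_gt a N with h | h
  · have key : ∀ M, a ≤ M → ∑ t ∈ Icc a M, 1 / ((t:ℝ) * Real.sqrt t)
        ≤ 3 / Real.sqrt a - 2 / Real.sqrt M := by
      intro M hM
      induction M, hM using Nat.le_induction with
      | base =>
        rw [Finset.Icc_self, Finset.sum_singleton]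
        have e1 : Real.sqrt a ^ 2 = (a:ℝ) := Real.sq_sqrt (by positivity)
        have h1 : (1:ℝ) ≤ Real.sqrt a := by
          rw [show (1:ℝ) = Real.sqrt 1 by simp]
          exact Real.sqrt_le_sqrt (by exact_mod_cast ha)
        rw [div_le_iff₀ (by positivity)]
        have : 3 / Real.sqrt a - 2 / Real.sqrt a = 1 / Real.sqrt a := by ring
        rw [this, div_mul_eq_mul_div, le_div_iff₀ hsa]
        nlinarith
      | succ M hM ih =>
        rw [Finset.sum_Icc_succ_top (by omega)]
        have hM1 : (1:ℝ) ≤ (M:ℝ) := by exact_mod_cast hM.trans' ha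
        have hsM : (0:ℝ) < Real.sqrt M := Real.sqrt_pos.mpr (by linarith)
        have hsM1 : (0:ℝ) < Real.sqrt ((M:ℝ)+1) := Real.sqrt_pos.mpr (by linarith)
        have e1 : Real.sqrt M ^ 2 = (M:ℝ) := Real.sq_sqrt (by positivity)
        have e2 : Real.sqrt ((M:ℝ)+1) ^ 2 = (M:ℝ)+1 := Real.sq_sqrt (by positivity)
        have hle : Real.sqrt M ≤ Real.sqrt ((M:ℝ)+1) := Real.sqrt_le_sqrt (by linarith)
        have key2 : 1 / (((M:ℝ)+1) * Real.sqrt ((M:ℝ)+1))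
            ≤ 2 / Real.sqrt M - 2 / Real.sqrt ((M:ℝ)+1) := by
          rw [div_sub_div _ _ (ne_of_gt hsM) (ne_of_gt hsM1), div_le_div_iff₀ (by positivity) (by positivity)]
          nlinarith [mul_pos hsM hsM1, sq_nonneg (Real.sqrt ((M:ℝ)+1) - Real.sqrt M)]
        push_cast
        push_cast at ih
        linarith
    have := key N h
    have : 2 / Real.sqrt N ≥ 0 := by positivity
    linarith [key N h]
  · rw [Finset.Icc_eq_empty (by omega), Finset.sum_empty]
    positivity


private lemma aux_cs (s : Finset ℕ) (f g : ℕ → ℝ) (h : 0 ≤ ∑ i ∈ s, f i * g i) :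
    ∑ i ∈ s, f i * g i ≤ Real.sqrt (∑ i ∈ s, f i ^ 2) * Real.sqrt (∑ i ∈ s, g i ^ 2) := by
  have cs := Finset.sum_mul_sq_le_sq_mul_sq s f g
  have h1 : (0:ℝ) ≤ ∑ i ∈ s, f i ^ 2 := Finset.sum_nonneg fun i _ => sq_nonneg _
  have h2 : (0:ℝ) ≤ ∑ i ∈ s, g i ^ 2 := Finset.sum_nonneg fun i _ => sq_nonneg _
  rw [← Real.sqrt_mul h1]
  rw [show ∑ i ∈ s, f i * g i = Real.sqrt ((∑ i ∈ s, f i * g i)^2) from (Real.sqrt_sq h).symm]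
  exact Real.sqrt_le_sqrt cs

private lemma aux_sum_le_sqrt_card (s : Finset ℕ) (f : ℕ → ℝ) (hf : ∀ i ∈ s, 0 ≤ f i) :
    ∑ i ∈ s, f i ≤ Real.sqrt s.card * Real.sqrt (∑ i ∈ s, f i ^ 2) := by
  have h0 : ∑ i ∈ s, f i = ∑ i ∈ s, 1 * f i := by simp
  have h1 : ∑ i ∈ s, (1:ℝ) ^ 2 = s.card := by simp
  rw [h0, ← h1]
  exact aux_cs s (fun _ => 1) f (by rw [← h0]; exact Finset.sum_nonneg hf)


private lemma aux_amgm (u v p q : ℝ) (hp : 0 < p) (hq : 0 < q) :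
    u * v * p^2 ≤ ((p^2*u)^2 * p/(q^2*q) + (q^2*v)^2/(p*q))/2 := by
  have key : ((p^2*u)^2 * p/(q^2*q) + (q^2*v)^2/(p*q))/2 - u * v * p^2
      = (p^2*u*p - q^2*v*q)^2/(2*p*q^3) := by
    field_simp
    ring
  nlinarith [sq_nonneg (p^2*u*p - q^2*v*q), key, div_nonneg (sq_nonneg (p^2*u*p - q^2*v*q)) (by positivity : (0:ℝ) ≤ 2*p*q^3)]

private lemma aux_hilbert (c : ℕ → ℝ) (N : ℕ) :
    ∑ t ∈ Icc 1 N, ∑ t' ∈ Icc 1 N, c t * c t' * ((min t t' : ℕ) : ℝ)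
      ≤ 5 * ∑ k ∈ Icc 1 N, ((k:ℝ) * c k)^2 := by
  set h1 : ℕ → ℕ → ℝ := fun t t' =>
    if t ≤ t' then ((t:ℝ) * c t)^2 * Real.sqrt t / ((t':ℝ) * Real.sqrt t') else 0 with hh1
  set h2 : ℕ → ℕ → ℝ := fun t t' =>
    if t ≤ t' then ((t':ℝ) * c t')^2 / (Real.sqrt t * Real.sqrt t') else 0 with hh2
  have h1nn : ∀ t t', 0 ≤ h1 t t' := by
    intro t t'; rw [hh1]; dsimp only; split_ifs
    · positivity
    · exact le_refl 0
  have h2nn : ∀ t t', 0 ≤ h2 t t' := by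
    intro t t'; rw [hh2]; dsimp only; split_ifs
    · positivity
    · exact le_refl 0
  -- core: for 1 ≤ t ≤ t' : c t * c t' * t ≤ (h1 t t' + h2 t t')/2
  have core : ∀ t t', 1 ≤ t → t ≤ t' →
      c t * c t' * (t:ℝ) ≤ (h1 t t' + h2 t t') / 2 := by
    intro t t' ht htt'
    have hp : (0:ℝ) < Real.sqrt t := Real.sqrt_pos.mpr (by exact_mod_cast Nat.lt_of_lt_of_le Nat.zero_lt_one ht)
    have hq : (0:ℝ) < Real.sqrt t' := Real.sqrt_pos.mpr (by exact_mod_cast Nat.lt_of_lt_of_le Nat.zero_lt_one (ht.trans htt'))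
    have e1 : ((t:ℝ)) = Real.sqrt t ^ 2 := (Real.sq_sqrt (by positivity)).symm
    have e2 : ((t':ℝ)) = Real.sqrt t' ^ 2 := (Real.sq_sqrt (by positivity)).symm
    rw [hh1, hh2]; dsimp only
    rw [if_pos htt', if_pos htt']
    calc c t * c t' * (t:ℝ) = c t * c t' * Real.sqrt t ^ 2 := by rw [← e1]
    _ ≤ ((Real.sqrt t ^2 * c t)^2 * Real.sqrt t/(Real.sqrt t' ^2 * Real.sqrt t')
          + (Real.sqrt t' ^2 * c t')^2/(Real.sqrt t * Real.sqrt t'))/2 :=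
        aux_amgm (c t) (c t') _ _ hp hq
    _ = (((t:ℝ) * c t)^2 * Real.sqrt t / ((t':ℝ) * Real.sqrt t')
          + ((t':ℝ) * c t')^2 / (Real.sqrt t * Real.sqrt t'))/2 := by rw [← e1, ← e2]
  -- pointwise bound
  have hpt : ∀ t ∈ Icc 1 N, ∀ t' ∈ Icc 1 N,
      c t * c t' * ((min t t' : ℕ) : ℝ)
        ≤ (h1 t t' + h2 t t')/2 + (h1 t' t + h2 t' t)/2 := by
    intro t ht t' ht'
    simp only [Finset.mem_Icc] at ht ht'
    rcases le_or_gt t t' with h | h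
    · rw [min_eq_left h]
      have := core t t' ht.1 h
      have := h1nn t' t; have := h2nn t' t
      linarith
    · rw [min_eq_right h.le]
      have h2' := core t' t ht'.1 h.le
      have := h1nn t t'; have := h2nn t t'
      calc c t * c t' * ((t':ℕ):ℝ) = c t' * c t * ((t':ℕ):ℝ) := by ring
      _ ≤ (h1 t' t + h2 t' t)/2 := h2'
      _ ≤ _ := by linarith
  have step1 : ∑ t ∈ Icc 1 N, ∑ t' ∈ Icc 1 N, c t * c t' * ((min t t' : ℕ) : ℝ)
      ≤ ∑ t ∈ Icc 1 N, ∑ t' ∈ Icc 1 N, ((h1 t t' + h2 t t')/2 + (h1 t' t + h2 t' t)/2) := by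
    refine Finset.sum_le_sum fun t ht => Finset.sum_le_sum fun t' ht' => hpt t ht t' ht'
  -- symmetrize
  have step2 : ∑ t ∈ Icc 1 N, ∑ t' ∈ Icc 1 N, ((h1 t t' + h2 t t')/2 + (h1 t' t + h2 t' t)/2)
      = (∑ t ∈ Icc 1 N, ∑ t' ∈ Icc 1 N, h1 t t') + (∑ t ∈ Icc 1 N, ∑ t' ∈ Icc 1 N, h2 t t') := by
    have sc1 : ∑ t ∈ Icc 1 N, ∑ t' ∈ Icc 1 N, h1 t' t = ∑ t ∈ Icc 1 N, ∑ t' ∈ Icc 1 N, h1 t t' :=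
      Finset.sum_comm
    have sc2 : ∑ t ∈ Icc 1 N, ∑ t' ∈ Icc 1 N, h2 t' t = ∑ t ∈ Icc 1 N, ∑ t' ∈ Icc 1 N, h2 t t' :=
      Finset.sum_comm
    simp only [← Finset.sum_div, Finset.sum_add_distrib]
    rw [sc1, sc2]; ring
  have filt1 : ∀ t : ℕ, 1 ≤ t → (Icc 1 N).filter (fun t' => t ≤ t') = Icc t N := by
    intro t ht; ext x; simp only [Finset.mem_filter, Finset.mem_Icc]; omega
  have filt2 : ∀ t' : ℕ, t' ≤ N → (Icc 1 N).filter (fun t => t ≤ t') = Icc 1 t' := by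
    intro t' ht'; ext x; simp only [Finset.mem_filter, Finset.mem_Icc]; omega
  have hS1 : ∑ t ∈ Icc 1 N, ∑ t' ∈ Icc 1 N, h1 t t'
      ≤ 3 * ∑ k ∈ Icc 1 N, ((k:ℝ) * c k)^2 := by
    rw [Finset.mul_sum]
    refine Finset.sum_le_sum fun t ht => ?_
    simp only [Finset.mem_Icc] at ht
    have hst : (0:ℝ) < Real.sqrt t := Real.sqrt_pos.mpr (by exact_mod_cast ht.1.trans_lt' Nat.zero_lt_one)
    have e1 : ∑ t' ∈ Icc 1 N, h1 t t'
        = ∑ t' ∈ Icc t N, ((t:ℝ) * c t)^2 * Real.sqrt t / ((t':ℝ) * Real.sqrt t') := by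
      rw [← filt1 t ht.1, Finset.sum_filter]
    rw [e1]
    have e2 : ∀ t' : ℕ, ((t:ℝ) * c t)^2 * Real.sqrt t / ((t':ℝ) * Real.sqrt t')
        = ((t:ℝ) * c t)^2 * Real.sqrt t * (1/((t':ℝ) * Real.sqrt t')) := by
      intro t'; ring
    simp only [e2]
    rw [← Finset.mul_sum]
    calc ((t:ℝ) * c t)^2 * Real.sqrt t * (∑ t' ∈ Icc t N, 1/((t':ℝ) * Real.sqrt t'))
        ≤ ((t:ℝ) * c t)^2 * Real.sqrt t * (3 / Real.sqrt t) := by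
          exact mul_le_mul_of_nonneg_left (aux_sum_pow32 t N ht.1) (by positivity)
    _ = 3 * ((t:ℝ) * c t)^2 := by
          field_simp
  have hS2 : ∑ t ∈ Icc 1 N, ∑ t' ∈ Icc 1 N, h2 t t'
      ≤ 2 * ∑ k ∈ Icc 1 N, ((k:ℝ) * c k)^2 := by
    rw [Finset.sum_comm, Finset.mul_sum]
    refine Finset.sum_le_sum fun t' ht' => ?_
    simp only [Finset.mem_Icc] at ht'
    have hst : (0:ℝ) < Real.sqrt t' := Real.sqrt_pos.mpr (by exact_mod_cast ht'.1.trans_lt' Nat.zero_lt_one)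
    have e1 : ∑ t ∈ Icc 1 N, h2 t t'
        = ∑ t ∈ Icc 1 t', ((t':ℝ) * c t')^2 / (Real.sqrt t * Real.sqrt t') := by
      rw [← filt2 t' ht'.2, Finset.sum_filter]
    rw [e1]
    have e2 : ∀ t : ℕ, ((t':ℝ) * c t')^2 / (Real.sqrt t * Real.sqrt t')
        = ((t':ℝ) * c t')^2 / Real.sqrt t' * (1/Real.sqrt t) := by
      intro t; ring
    simp only [e2]
    rw [← Finset.mul_sum]
    calc ((t':ℝ) * c t')^2 / Real.sqrt t' * (∑ t ∈ Icc 1 t', 1/Real.sqrt t)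
        ≤ ((t':ℝ) * c t')^2 / Real.sqrt t' * (2 * Real.sqrt t') := by
          exact mul_le_mul_of_nonneg_left (aux_sum_inv_sqrt t') (by positivity)
    _ = 2 * ((t':ℝ) * c t')^2 := by
          field_simp
  calc ∑ t ∈ Icc 1 N, ∑ t' ∈ Icc 1 N, c t * c t' * ((min t t' : ℕ) : ℝ)
      ≤ _ := step1
  _ = _ := step2
  _ ≤ 3 * (∑ k ∈ Icc 1 N, ((k:ℝ) * c k)^2) + 2 * (∑ k ∈ Icc 1 N, ((k:ℝ) * c k)^2) := by
      exact add_le_add hS1 hS2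
  _ = 5 * ∑ k ∈ Icc 1 N, ((k:ℝ) * c k)^2 := by ring

private lemma main_est (c : ℕ → ℝ) (hc : ∀ k, 0 ≤ c k) (N : ℕ) (hN : 1 ≤ N) :
    ∑ s ∈ Icc 1 N, ∑ t ∈ Icc 1 N, (if N + 1 ≤ s + t then (s : ℝ) * c s * c t else 0)
      ≤ 5 * (Real.sqrt (∑ k ∈ Icc 1 N, ((k:ℝ) * c k)^2)
          * Real.sqrt (∑ k ∈ Icc (N/2+1) N, ((k:ℝ) * c k)^2)) := by
  have hNR : (0:ℝ) < N := by exact_mod_cast hN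
  set b : ℕ → ℝ := fun k => (k:ℝ) * c k with hb
  have hbnn : ∀ k, 0 ≤ b k := fun k => mul_nonneg (by positivity) (hc k)
  set P : ℝ := ∑ k ∈ Icc 1 N, b k ^ 2 with hP
  set Q : ℝ := ∑ k ∈ Icc (N/2+1) N, b k ^ 2 with hQ
  have hPnn : 0 ≤ P := Finset.sum_nonneg fun k _ => sq_nonneg _
  have hQnn : 0 ≤ Q := Finset.sum_nonneg fun k _ => sq_nonneg _
  set S1 : ℝ := ∑ s ∈ Icc 1 N, ∑ t ∈ Icc 1 N,
      (if N + 1 ≤ s + t ∧ t ≤ s then (s:ℝ) * c s * c t else 0) with hS1def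
  set S2 : ℝ := ∑ s ∈ Icc 1 N, ∑ t ∈ Icc 1 N,
      (if N + 1 ≤ s + t ∧ s < t then (s:ℝ) * c s * c t else 0) with hS2def
  have hsplit : ∑ s ∈ Icc 1 N, ∑ t ∈ Icc 1 N,
      (if N + 1 ≤ s + t then (s : ℝ) * c s * c t else 0) = S1 + S2 := by
    rw [hS1def, hS2def, ← Finset.sum_add_distrib]
    refine Finset.sum_congr rfl fun s _ => ?_
    rw [← Finset.sum_add_distrib]
    refine Finset.sum_congr rfl fun t _ => ?_
    split_ifs
    all_goals try ring
    all_goals (exfalso; omega)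
  -- bounds on the two ℓ¹ sums
  have hSb : ∑ k ∈ Icc 1 N, b k ≤ Real.sqrt N * Real.sqrt P := by
    have := aux_sum_le_sqrt_card (Icc 1 N) b (fun i _ => hbnn i)
    rwa [Nat.card_Icc, show (↑(N + 1 - 1) : ℝ) = (N:ℝ) by norm_num] at this
  have hSg : ∑ k ∈ Icc (N/2+1) N, b k ≤ Real.sqrt N * Real.sqrt Q := by
    have h1 := aux_sum_le_sqrt_card (Icc (N/2+1) N) b (fun i _ => hbnn i)
    have h2 : Real.sqrt ((Icc (N/2+1) N).card) ≤ Real.sqrt N := by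
      apply Real.sqrt_le_sqrt
      rw [Nat.card_Icc]
      exact_mod_cast (by omega : N + 1 - (N/2+1) ≤ N)
    calc ∑ k ∈ Icc (N/2+1) N, b k ≤ _ := h1
    _ ≤ Real.sqrt N * Real.sqrt Q :=
        mul_le_mul_of_nonneg_right h2 (Real.sqrt_nonneg _)
  have hSbnn : 0 ≤ ∑ k ∈ Icc 1 N, b k := Finset.sum_nonneg fun k _ => hbnn k
  have hSgnn : 0 ≤ ∑ k ∈ Icc (N/2+1) N, b k := Finset.sum_nonneg fun k _ => hbnn k
  -- S2 bound
  have hS2 : S2 ≤ 2 * (Real.sqrt P * Real.sqrt Q) := by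
    set g : ℕ → ℝ := fun t => if N/2 + 1 ≤ t then b t else 0 with hgdef
    have e2 : (2/(N:ℝ)) * ((∑ s ∈ Icc 1 N, b s) * (∑ t ∈ Icc 1 N, g t))
        = ∑ s ∈ Icc 1 N, ∑ t ∈ Icc 1 N, 2/(N:ℝ) * (b s * g t) := by
      rw [Finset.sum_mul_sum, Finset.mul_sum]
      exact Finset.sum_congr rfl fun s _ => by rw [Finset.mul_sum]
    have step : S2 ≤ (2/(N:ℝ)) * ((∑ s ∈ Icc 1 N, b s) * (∑ t ∈ Icc 1 N, g t)) := by
      rw [e2, hS2def]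
      refine Finset.sum_le_sum fun s hs => ?_
      refine Finset.sum_le_sum fun t ht => ?_
      rw [hgdef]; dsimp only
      simp only [Finset.mem_Icc] at hs ht
      split_ifs with hcond hind
      · -- main case
        have h2t : (N:ℝ) ≤ 2*t := by exact_mod_cast (by omega : N ≤ 2*t)
        have hX : (0:ℝ) ≤ (s:ℝ) * c s := mul_nonneg (by positivity) (hc s)
        have key : ((s:ℝ) * c s * c t) * (N:ℝ) ≤ ((s:ℝ) * c s * c t) * (2*t) :=
          mul_le_mul_of_nonneg_left h2t (mul_nonneg hX (hc t))
        rw [hb]; dsimp only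
        rw [show (2/(N:ℝ)) * ((s:ℝ) * c s * ((t:ℝ) * c t)) = (2 * ((s:ℝ) * c s * ((t:ℝ) * c t)))/N by ring,
          le_div_iff₀ hNR]
        nlinarith [key]
      · exact absurd (by omega : N/2 + 1 ≤ t) hind
      · have : (0:ℝ) ≤ b s * b t := mul_nonneg (hbnn s) (hbnn t)
        have h2N : (0:ℝ) ≤ 2/(N:ℝ) := by positivity
        nlinarith
      · simp only [mul_zero]
        exact le_refl 0
    have hgsum : (∑ t ∈ Icc 1 N, g t) = ∑ t ∈ Icc (N/2+1) N, b t := by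
      rw [hgdef, ← Finset.sum_filter]
      congr 1
      ext x; simp only [Finset.mem_filter, Finset.mem_Icc]; omega
    rw [hgsum] at step
    have prod : (∑ s ∈ Icc 1 N, b s) * (∑ t ∈ Icc (N/2+1) N, b t)
        ≤ (Real.sqrt N * Real.sqrt P) * (Real.sqrt N * Real.sqrt Q) :=
      mul_le_mul hSb hSg hSgnn (by positivity)
    have e : (2/(N:ℝ)) * ((Real.sqrt N * Real.sqrt P) * (Real.sqrt N * Real.sqrt Q))
        = 2 * (Real.sqrt P * Real.sqrt Q) := by
      have h : Real.sqrt N * Real.sqrt N = (N:ℝ) := Real.mul_self_sqrt (by positivity)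
      field_simp
      linear_combination (Real.sqrt P*Real.sqrt Q) * h
    calc S2 ≤ _ := step
    _ ≤ (2/(N:ℝ)) * ((Real.sqrt N * Real.sqrt P) * (Real.sqrt N * Real.sqrt Q)) := by
        apply mul_le_mul_of_nonneg_left prod (by positivity)
    _ = 2 * (Real.sqrt P * Real.sqrt Q) := e
  -- S1 bound
  set D : ℕ → ℝ := fun s => ∑ t ∈ Icc 1 N, (if N+1 ≤ s+t ∧ t ≤ s then c t else 0) with hDdef
  have hDnn : ∀ s, 0 ≤ D s := by
    intro s
    rw [hDdef]; dsimp only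
    refine Finset.sum_nonneg fun t _ => ?_
    split_ifs
    · exact hc t
    · exact le_refl 0
  have hS1eq : S1 = ∑ s ∈ Icc (N/2+1) N, b s * D s := by
    rw [hS1def]
    have e : ∀ s : ℕ, ∑ t ∈ Icc 1 N, (if N + 1 ≤ s + t ∧ t ≤ s then (s:ℝ) * c s * c t else 0)
        = b s * D s := by
      intro s
      rw [hDdef, hb]; dsimp only
      rw [Finset.mul_sum]
      refine Finset.sum_congr rfl fun t _ => ?_
      split_ifs <;> ring
    simp only [e]
    symm
    apply Finset.sum_subset (Finset.Icc_subset_Icc (by omega) le_rfl)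
    intro s hs hns
    simp only [Finset.mem_Icc] at hs hns
    have hD0 : D s = 0 := by
      rw [hDdef]; dsimp only
      apply Finset.sum_eq_zero
      intro t ht
      simp only [Finset.mem_Icc] at ht
      rw [if_neg]
      omega
    rw [hD0, mul_zero]
  have hcs1 : S1 ≤ Real.sqrt Q * Real.sqrt (∑ s ∈ Icc (N/2+1) N, D s ^ 2) := by
    rw [hS1eq]
    have h := aux_cs (Icc (N/2+1) N) b D
      (Finset.sum_nonneg fun s _ => mul_nonneg (hbnn s) (hDnn s))
    rwa [← hQ] at h
  have hD2 : ∑ s ∈ Icc (N/2+1) N, D s ^ 2 ≤ 5 * P := by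
    have expand : ∀ s : ℕ, D s ^ 2 = ∑ t ∈ Icc 1 N, ∑ t' ∈ Icc 1 N,
        (if N+1 ≤ s+t ∧ t ≤ s then c t else 0) * (if N+1 ≤ s+t' ∧ t' ≤ s then c t' else 0) := by
      intro s; rw [hDdef]; dsimp only; rw [sq, Finset.sum_mul_sum]
    simp only [expand]
    rw [Finset.sum_comm]
    have e3 : ∀ t : ℕ, ∑ s ∈ Icc (N/2+1) N, ∑ t' ∈ Icc 1 N,
          ((if N+1 ≤ s+t ∧ t ≤ s then c t else 0) * (if N+1 ≤ s+t' ∧ t' ≤ s then c t' else 0))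
        = ∑ t' ∈ Icc 1 N, ∑ s ∈ Icc (N/2+1) N,
          ((if N+1 ≤ s+t ∧ t ≤ s then c t else 0) * (if N+1 ≤ s+t' ∧ t' ≤ s then c t' else 0)) := by
      intro t; exact Finset.sum_comm
    have hinner : ∀ t ∈ Icc 1 N, ∀ t' ∈ Icc 1 N,
        ∑ s ∈ Icc (N/2+1) N,
          ((if N+1 ≤ s+t ∧ t ≤ s then c t else 0) * (if N+1 ≤ s+t' ∧ t' ≤ s then c t' else 0))
          ≤ c t * c t' * ((min t t' : ℕ) : ℝ) := by
      intro t ht t' ht'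
      simp only [Finset.mem_Icc] at ht ht'
      have hcc : (0:ℝ) ≤ c t * c t' := mul_nonneg (hc t) (hc t')
      have step1 : ∀ s ∈ Icc (N/2+1) N,
          (if N+1 ≤ s+t ∧ t ≤ s then c t else 0) * (if N+1 ≤ s+t' ∧ t' ≤ s then c t' else 0)
          ≤ c t * c t' * (if N+1 ≤ s + min t t' then (1:ℝ) else 0) := by
        intro s hs
        split_ifs
        all_goals try (exfalso; omega)
        all_goals nlinarith [hcc]
      calc ∑ s ∈ Icc (N/2+1) N,
          ((if N+1 ≤ s+t ∧ t ≤ s then c t else 0) * (if N+1 ≤ s+t' ∧ t' ≤ s then c t' else 0))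
          ≤ ∑ s ∈ Icc (N/2+1) N, c t * c t' * (if N+1 ≤ s + min t t' then (1:ℝ) else 0) :=
            Finset.sum_le_sum step1
      _ = c t * c t' * ∑ s ∈ Icc (N/2+1) N, (if N+1 ≤ s + min t t' then (1:ℝ) else 0) := by
            rw [Finset.mul_sum]
      _ ≤ c t * c t' * ((min t t' : ℕ) : ℝ) := by
            refine mul_le_mul_of_nonneg_left ?_ hcc
            rw [Finset.sum_boole]
            have hsub : (Icc (N/2+1) N).filter (fun s => N+1 ≤ s + min t t')
                ⊆ Icc (N+1-min t t') N := by
              intro x hx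
              simp only [Finset.mem_filter, Finset.mem_Icc] at hx ⊢
              omega
            have hcard : ((Icc (N/2+1) N).filter (fun s => N+1 ≤ s + min t t')).card
                ≤ min t t' := by
              refine (Finset.card_le_card hsub).trans ?_
              rw [Nat.card_Icc]
              omega
            exact_mod_cast hcard
    calc ∑ t ∈ Icc 1 N, ∑ s ∈ Icc (N/2+1) N, ∑ t' ∈ Icc 1 N,
          ((if N+1 ≤ s+t ∧ t ≤ s then c t else 0) * (if N+1 ≤ s+t' ∧ t' ≤ s then c t' else 0))
        = ∑ t ∈ Icc 1 N, ∑ t' ∈ Icc 1 N, ∑ s ∈ Icc (N/2+1) N,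
          ((if N+1 ≤ s+t ∧ t ≤ s then c t else 0) * (if N+1 ≤ s+t' ∧ t' ≤ s then c t' else 0)) :=
          Finset.sum_congr rfl fun t _ => e3 t
    _ ≤ ∑ t ∈ Icc 1 N, ∑ t' ∈ Icc 1 N, c t * c t' * ((min t t' : ℕ) : ℝ) :=
          Finset.sum_le_sum fun t ht => Finset.sum_le_sum fun t' ht' => hinner t ht t' ht'
    _ ≤ 5 * ∑ k ∈ Icc 1 N, ((k:ℝ) * c k)^2 := aux_hilbert c N
    _ = 5 * P := by rw [hP, hb]
  have hsqrt5 : Real.sqrt 5 ≤ 3 := by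
    rw [show (3:ℝ) = Real.sqrt 9 by
      rw [show (9:ℝ) = 3^2 by norm_num, Real.sqrt_sq (by norm_num : (0:ℝ) ≤ 3)]]
    exact Real.sqrt_le_sqrt (by norm_num)
  have hS1 : S1 ≤ 3 * (Real.sqrt P * Real.sqrt Q) := by
    calc S1 ≤ Real.sqrt Q * Real.sqrt (∑ s ∈ Icc (N/2+1) N, D s ^ 2) := hcs1
    _ ≤ Real.sqrt Q * Real.sqrt (5 * P) := by
        exact mul_le_mul_of_nonneg_left (Real.sqrt_le_sqrt hD2) (Real.sqrt_nonneg _)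
    _ = Real.sqrt Q * (Real.sqrt 5 * Real.sqrt P) := by
        rw [Real.sqrt_mul (by norm_num : (0:ℝ) ≤ 5)]
    _ ≤ Real.sqrt Q * (3 * Real.sqrt P) := by
        refine mul_le_mul_of_nonneg_left ?_ (Real.sqrt_nonneg _)
        exact mul_le_mul_of_nonneg_right hsqrt5 (Real.sqrt_nonneg _)
    _ = 3 * (Real.sqrt P * Real.sqrt Q) := by ring
  rw [hsplit]
  calc S1 + S2 ≤ 3 * (Real.sqrt P * Real.sqrt Q) + 2 * (Real.sqrt P * Real.sqrt Q) :=
      add_le_add hS1 hS2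
  _ = 5 * (Real.sqrt P * Real.sqrt Q) := by ring


/-- Lemma 2.1 (i): if `V_N = 2∑_{k=1}^N k²c_k²` is slowly varying (Karamata) and
diverges, then `∑_{1≤s,t≤N, s+t≥N+1} s·c_s·c_t = o(V_N)`. -/
theorem offdiag_sum_isLittleO_one
    (c : ℕ → ℝ) (hc : ∀ k, 0 ≤ c k)
    (V : ℕ → ℝ) (hV : ∀ N, V N = 2 * ∑ k ∈ Icc 1 N, (k : ℝ) ^ 2 * c k ^ 2)
    (hslow : ∀ l : ℝ, 0 < l →
      Tendsto (fun N : ℕ => V ⌊l * N⌋₊ / V N) atTop (nhds 1))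
    (hdiv : Tendsto V atTop atTop) :
    (fun N : ℕ => ∑ s ∈ Icc 1 N, ∑ t ∈ Icc 1 N,
        if N + 1 ≤ s + t then (s : ℝ) * c s * c t else 0) =o[atTop] V := by
  rw [Asymptotics.isLittleO_iff]
  intro ε hε
  have hhalf := hslow (1/2) (by norm_num)
  have hfloor : ∀ N : ℕ, ⌊(1/2 : ℝ) * (N:ℝ)⌋₊ = N / 2 := by
    intro N
    rw [show (1/2 : ℝ) * (N:ℝ) = (N:ℝ) / ((2:ℕ):ℝ) by push_cast; ring,
      Nat.floor_div_natCast, Nat.floor_natCast]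
  simp only [hfloor] at hhalf
  set d : ℝ := (2*ε/5)^2 with hd
  have hdpos : (0:ℝ) < d := by positivity
  have hev1 : ∀ᶠ N : ℕ in atTop, 1 - d < V (N/2) / V N :=
    hhalf.eventually (eventually_gt_nhds (by linarith))
  have hev2 : ∀ᶠ N : ℕ in atTop, 1 ≤ V N := hdiv.eventually_ge_atTop 1
  have hev3 : ∀ᶠ N : ℕ in atTop, 1 ≤ N := eventually_ge_atTop 1
  filter_upwards [hev1, hev2, hev3] with N h1 h2 h3
  have hVpos : 0 < V N := lt_of_lt_of_le one_pos h2
  set P : ℝ := ∑ k ∈ Icc 1 N, ((k:ℝ) * c k)^2 with hPdef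
  set Q : ℝ := ∑ k ∈ Icc (N/2+1) N, ((k:ℝ) * c k)^2 with hQdef
  have hPnn : 0 ≤ P := Finset.sum_nonneg fun k _ => sq_nonneg _
  have hQnn : 0 ≤ Q := Finset.sum_nonneg fun k _ => sq_nonneg _
  have hPV : V N = 2 * P := by
    rw [hV N, hPdef]
    congr 1
    exact Finset.sum_congr rfl fun k _ => by ring
  have hPV' : V (N/2) = 2 * (∑ k ∈ Icc 1 (N/2), ((k:ℝ)*c k)^2) := by
    rw [hV (N/2)]
    congr 1
    exact Finset.sum_congr rfl fun k _ => by ring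
  have hsplitPQ : (∑ k ∈ Icc 1 (N/2), ((k:ℝ)*c k)^2) + Q = P := by
    rw [hPdef, hQdef,
      show Icc 1 (N/2) = Ioc 0 (N/2) from Finset.Icc_add_one_left_eq_Ioc 0 (N/2),
      show Icc (N/2+1) N = Ioc (N/2) N from Finset.Icc_add_one_left_eq_Ioc (N/2) N,
      show Icc 1 N = Ioc 0 N from Finset.Icc_add_one_left_eq_Ioc 0 N]
    exact Finset.sum_Ioc_consecutive _ (Nat.zero_le _) (Nat.div_le_self N 2)
  have hQd : Q ≤ d * P := by
    rw [lt_div_iff₀ hVpos] at h1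
    nlinarith [h1, hPV, hPV', hsplitPQ]
  have hTnn : 0 ≤ ∑ s ∈ Icc 1 N, ∑ t ∈ Icc 1 N,
      (if N + 1 ≤ s + t then (s : ℝ) * c s * c t else 0) := by
    refine Finset.sum_nonneg fun s _ => Finset.sum_nonneg fun t _ => ?_
    split_ifs
    · exact mul_nonneg (mul_nonneg (by positivity) (hc s)) (hc t)
    · exact le_refl 0
  rw [Real.norm_of_nonneg hTnn, Real.norm_of_nonneg hVpos.le]
  have hsq : Real.sqrt Q ≤ (2*ε/5) * Real.sqrt P := by
    have h5 : Real.sqrt Q ≤ Real.sqrt (d*P) := Real.sqrt_le_sqrt hQd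
    rwa [Real.sqrt_mul hdpos.le, hd, Real.sqrt_sq (by positivity)] at h5
  calc ∑ s ∈ Icc 1 N, ∑ t ∈ Icc 1 N,
        (if N + 1 ≤ s + t then (s : ℝ) * c s * c t else 0)
      ≤ 5 * (Real.sqrt P * Real.sqrt Q) := main_est c hc N h3
  _ ≤ 5 * (Real.sqrt P * ((2*ε/5) * Real.sqrt P)) := by
      refine mul_le_mul_of_nonneg_left ?_ (by norm_num)
      exact mul_le_mul_of_nonneg_left hsq (Real.sqrt_nonneg _)
  _ = 2*ε*(Real.sqrt P * Real.sqrt P) := by ring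
  _ = 2*ε*P := by rw [Real.mul_self_sqrt hPnn]
  _ = ε * V N := by rw [hPV]; ring
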